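/- arXiv:0809.3674 — 5 statements merged into one kernel-verified Lean document; each statement's English description precedes it below -/
import Mathlib

section
/- Let d, α ∈ (0,1) and let a_1, ..., a_n be real numbers with ∑ a_i ≥ (d - α)n and ∑ a_i² ≤ (d² + α)n. Then for all but at most 3α^{1/2} n values of i we have |a_i - d| ≤ α^{1/4}. -/
/-- Second moment method: if `a : Fin n → ℝ` satisfies `∑ aᵢ ≥ (d - α) n` and
`∑ aᵢ² ≤ (d² + α) n` with `d, α ∈ (0,1)`, then for all but at most `3 α^{1/2} n`
values of `i` we have `|aᵢ - d| ≤ α^{1/4}`. -/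
theorem second_moment_method (n : ℕ) (a : Fin n → ℝ) (d α : ℝ)
    (hd0 : 0 < d) (hd1 : d < 1) (hα0 : 0 < α) (hα1 : α < 1)
    (hsum : (d - α) * n ≤ ∑ i, a i)
    (hsq : ∑ i, (a i) ^ 2 ≤ (d ^ 2 + α) * n) :
    (Nat.card {i : Fin n // α ^ ((1 : ℝ) / 4) < |a i - d|} : ℝ)
      ≤ 3 * α ^ ((1 : ℝ) / 2) * n := by
  have hα4 : (0:ℝ) < α ^ ((1:ℝ)/4) := Real.rpow_pos_of_pos hα0 _
  have hα2 : (0:ℝ) < α ^ ((1:ℝ)/2) := Real.rpow_pos_of_pos hα0 _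
  have hhalf : α ^ ((1:ℝ)/2) * α ^ ((1:ℝ)/2) = α := by
    rw [← Real.rpow_add hα0]; norm_num
  have hq : (α ^ ((1:ℝ)/4)) ^ 2 = α ^ ((1:ℝ)/2) := by
    rw [← Real.rpow_natCast (α ^ ((1:ℝ)/4)) 2, ← Real.rpow_mul hα0.le]
    norm_num
  have hn0 : (0:ℝ) ≤ (n:ℝ) := Nat.cast_nonneg n
  have expand : ∑ i, (a i - d)^2 = ∑ i, (a i)^2 - 2*d*(∑ i, a i) + (n:ℝ)*d^2 := by
    have h : ∀ i : Fin n, (a i - d)^2 = (a i)^2 - 2*d*(a i) + d^2 := fun i => by ring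
    simp_rw [h]
    rw [Finset.sum_add_distrib, Finset.sum_sub_distrib, ← Finset.mul_sum,
      Finset.sum_const, Finset.card_univ, Fintype.card_fin, nsmul_eq_mul]
  have hsq2 : ∑ i, (a i - d)^2 ≤ 3 * α * n := by
    rw [expand]
    nlinarith [mul_le_mul_of_nonneg_left hsum (le_of_lt hd0),
      mul_nonneg (mul_nonneg hα0.le hn0) (sub_nonneg.2 hd1.le),
      mul_nonneg hα0.le hn0]
  set S := Finset.univ.filter (fun i : Fin n => α ^ ((1:ℝ)/4) < |a i - d|) with hS
  have hcard : Nat.card {i : Fin n // α ^ ((1:ℝ)/4) < |a i - d|} = S.card := by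
    rw [Nat.card_eq_fintype_card, Fintype.card_subtype]
  have key : (S.card : ℝ) * α ^ ((1:ℝ)/2) ≤ 3 * α * n := by
    calc (S.card:ℝ) * α ^ ((1:ℝ)/2) = ∑ _i ∈ S, α ^ ((1:ℝ)/2) := by
          rw [Finset.sum_const, nsmul_eq_mul]
      _ ≤ ∑ i ∈ S, (a i - d)^2 := by
          refine Finset.sum_le_sum (fun i hi => ?_)
          have hi' : α ^ ((1:ℝ)/4) < |a i - d| := (Finset.mem_filter.mp hi).2
          calc α ^ ((1:ℝ)/2) = (α ^ ((1:ℝ)/4))^2 := hq.symm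
            _ ≤ |a i - d|^2 := by
                exact pow_le_pow_left₀ hα4.le hi'.le 2
            _ = (a i - d)^2 := sq_abs _
      _ ≤ ∑ i, (a i - d)^2 :=
          Finset.sum_le_sum_of_subset_of_nonneg (Finset.subset_univ _)
            (fun i _ _ => sq_nonneg _)
      _ ≤ 3 * α * n := hsq2
  rw [hcard]
  rw [← le_div_iff₀ hα2] at key
  refine key.trans (le_of_eq ?_)
  rw [div_eq_iff (ne_of_gt hα2)]
  nlinarith [hhalf]
end

section
/- Let f : X × Y → [-1,1] and let u : X → [0,1], v : Y → [0,1] be functions on finite nonempty sets X, Y. Then (E_{x∈X, y∈Y} u(x)v(y)f(x,y))⁴ ≤ C₄(f), where C₄(f) = E_{x₁,x₂∈X, y₁,y₂∈Y} f(x₁,y₁)f(x₁,y₂)f(x₂,y₁)f(x₂,y₂). -/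
/-- Gowers–Cauchy–Schwarz: for `f : X × Y → [-1,1]`, `u : X → [0,1]`,
`v : Y → [0,1]`, we have `(E u(x) v(y) f(x,y))⁴ ≤ C₄(f)`. -/
theorem gowers_cauchy_schwarz (X Y : Type*) [Fintype X] [Fintype Y]
    [Nonempty X] [Nonempty Y] (f : X → Y → ℝ) (u : X → ℝ) (v : Y → ℝ)
    (hf : ∀ x y, -1 ≤ f x y ∧ f x y ≤ 1)
    (hu : ∀ x, 0 ≤ u x ∧ u x ≤ 1) (hv : ∀ y, 0 ≤ v y ∧ v y ≤ 1) :
    ((∑ x, ∑ y, u x * v y * f x y) /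
        ((Fintype.card X : ℝ) * (Fintype.card Y : ℝ))) ^ 4
      ≤ (∑ x₁, ∑ x₂, ∑ y₁, ∑ y₂, f x₁ y₁ * f x₁ y₂ * f x₂ y₁ * f x₂ y₂) /
        ((Fintype.card X : ℝ) ^ 2 * (Fintype.card Y : ℝ) ^ 2) := by
  set m : ℝ := (Fintype.card X : ℝ) with hm
  set n : ℝ := (Fintype.card Y : ℝ) with hn
  have hm0 : 0 < m := by rw [hm]; exact_mod_cast Fintype.card_pos
  have hn0 : 0 < n := by rw [hn]; exact_mod_cast Fintype.card_pos
  set S : ℝ := ∑ x, ∑ y, u x * v y * f x y with hS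
  set C : ℝ := ∑ x₁, ∑ x₂, ∑ y₁, ∑ y₂, f x₁ y₁ * f x₁ y₂ * f x₂ y₁ * f x₂ y₂ with hC
  set T : ℝ := ∑ x, (∑ y, v y * f x y) ^ 2 with hT
  have hT0 : 0 ≤ T := Finset.sum_nonneg fun x _ => sq_nonneg _
  -- First Cauchy–Schwarz: S² ≤ m * T
  have h1 : S ^ 2 ≤ m * T := by
    have cs := Finset.sum_mul_sq_le_sq_mul_sq Finset.univ u (fun x => ∑ y, v y * f x y)
    have hSeq : S = ∑ x, u x * ∑ y, v y * f x y := by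
      rw [hS]
      refine Finset.sum_congr rfl fun x _ => ?_
      rw [Finset.mul_sum]
      exact Finset.sum_congr rfl fun y _ => by ring
    have hub : (∑ x : X, u x ^ 2) ≤ m := by
      calc (∑ x : X, u x ^ 2) ≤ ∑ _x : X, (1 : ℝ) := by
            refine Finset.sum_le_sum fun x _ => ?_
            nlinarith [(hu x).1, (hu x).2]
        _ = m := by simp [hm]
    calc S ^ 2 ≤ (∑ x : X, u x ^ 2) * T := by rw [hSeq]; exact cs
      _ ≤ m * T := mul_le_mul_of_nonneg_right hub hT0
  -- Rewrite T and C as sums over pairs in Y × Y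
  have hTeq : T = ∑ p : Y × Y, (v p.1 * v p.2) * ∑ x, f x p.1 * f x p.2 := by
    calc T = ∑ x, (∑ y, v y * f x y) ^ 2 := hT
      _ = ∑ x, ∑ p : Y × Y, (v p.1 * f x p.1) * (v p.2 * f x p.2) := by
          refine Finset.sum_congr rfl fun x _ => ?_
          rw [sq, Finset.sum_mul_sum, ← Finset.univ_product_univ, Finset.sum_product]
      _ = ∑ p : Y × Y, ∑ x, (v p.1 * f x p.1) * (v p.2 * f x p.2) := Finset.sum_comm
      _ = ∑ p : Y × Y, (v p.1 * v p.2) * ∑ x, f x p.1 * f x p.2 := by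
          refine Finset.sum_congr rfl fun p _ => ?_
          rw [Finset.mul_sum]
          exact Finset.sum_congr rfl fun x _ => by ring
  have hCeq : (∑ p : Y × Y, (∑ x, f x p.1 * f x p.2) ^ 2) = C := by
    calc ∑ p : Y × Y, (∑ x, f x p.1 * f x p.2) ^ 2
        = ∑ p : Y × Y, ∑ x₁, ∑ x₂, (f x₁ p.1 * f x₁ p.2) * (f x₂ p.1 * f x₂ p.2) := by
          refine Finset.sum_congr rfl fun p _ => ?_
          rw [sq, Finset.sum_mul_sum]
      _ = ∑ x₁, ∑ p : Y × Y, ∑ x₂, (f x₁ p.1 * f x₁ p.2) * (f x₂ p.1 * f x₂ p.2) :=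
          Finset.sum_comm
      _ = ∑ x₁, ∑ x₂, ∑ p : Y × Y, (f x₁ p.1 * f x₁ p.2) * (f x₂ p.1 * f x₂ p.2) :=
          Finset.sum_congr rfl fun x₁ _ => Finset.sum_comm
      _ = ∑ x₁, ∑ x₂, ∑ y₁, ∑ y₂, f x₁ y₁ * f x₁ y₂ * f x₂ y₁ * f x₂ y₂ := by
          refine Finset.sum_congr rfl fun x₁ _ => Finset.sum_congr rfl fun x₂ _ => ?_
          rw [Fintype.sum_prod_type]
          exact Finset.sum_congr rfl fun y₁ _ => Finset.sum_congr rfl fun y₂ _ => by ring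
      _ = C := hC.symm
  have hC0 : 0 ≤ C := hCeq ▸ Finset.sum_nonneg fun p _ => sq_nonneg _
  -- Second Cauchy–Schwarz: T² ≤ n² * C
  have h2 : T ^ 2 ≤ n ^ 2 * C := by
    have cs := Finset.sum_mul_sq_le_sq_mul_sq Finset.univ
      (fun p : Y × Y => v p.1 * v p.2) (fun p : Y × Y => ∑ x, f x p.1 * f x p.2)
    have hvb : (∑ p : Y × Y, (v p.1 * v p.2) ^ 2) ≤ n ^ 2 := by
      calc (∑ p : Y × Y, (v p.1 * v p.2) ^ 2) ≤ ∑ _p : Y × Y, (1 : ℝ) := by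
            refine Finset.sum_le_sum fun p _ => ?_
            nlinarith [(hv p.1).1, (hv p.1).2, (hv p.2).1, (hv p.2).2,
              mul_nonneg (hv p.1).1 (hv p.2).1,
              mul_le_mul (hv p.1).2 (hv p.2).2 (hv p.2).1 zero_le_one]
        _ = n ^ 2 := by simp [hn, Fintype.card_prod]; ring
    calc T ^ 2 = (∑ p : Y × Y, (v p.1 * v p.2) * ∑ x, f x p.1 * f x p.2) ^ 2 := by
          rw [hTeq]
      _ ≤ (∑ p : Y × Y, (v p.1 * v p.2) ^ 2) * ∑ p : Y × Y, (∑ x, f x p.1 * f x p.2) ^ 2 :=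
          cs
      _ ≤ n ^ 2 * C := by
          rw [hCeq]
          exact mul_le_mul_of_nonneg_right hvb hC0
  -- Combine: S⁴ ≤ m² n² C
  have h3 : S ^ 4 ≤ m ^ 2 * n ^ 2 * C := by
    nlinarith [sq_nonneg S, sq_nonneg m, mul_le_mul_of_nonneg_left h2 (sq_nonneg m),
      pow_le_pow_left₀ (sq_nonneg S) h1 2, sq_nonneg (m * T)]
  rw [div_pow, div_le_div_iff₀ (by positivity) (by positivity)]
  nlinarith [mul_le_mul_of_nonneg_right h3 (show (0:ℝ) ≤ m ^ 2 * n ^ 2 by positivity)]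
end

section
/- Let G be a bipartite graph with parts X, Y of sizes at least n and density d, where 0 < 1/n ≪ ε₃ ≪ ε₁ ≪ d ≤ 1 (specifically, it suffices that ε₁ = ε₃^{1/12}). If C₄(Ḡ) < ε₃, where Ḡ(x,y) = G(x,y) − d is the balanced function and C₄(f) = E_{x₁,x₂∈X, y₁,y₂∈Y} f(x₁,y₁)f(x₁,y₂)f(x₂,y₁)f(x₂,y₂), then G is ε₁-regular: for all X' ⊆ X, Y' ⊆ Y with |X'| > ε₁|X| and |Y'| > ε₁|Y|, the induced density d(X',Y') = e(X',Y')/(|X'||Y'|) satisfies |d(X',Y') − d| < ε₁. -/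
/-- Quasirandomness implies regularity: if the balanced function `Ḡ = G - d` of a
bipartite graph `G` of density `d` satisfies `C₄(Ḡ) < ε₃`, then `G` is
`ε₁`-regular, where `ε₁ = ε₃^{1/12}`. -/
theorem quasirandom_implies_regular (X Y : Type*) [Fintype X] [Fintype Y]
    [Nonempty X] [Nonempty Y] (G : X → Y → ℝ) (hG : ∀ x y, G x y = 0 ∨ G x y = 1)
    (d : ℝ)
    (hd : d = (∑ x, ∑ y, G x y) / ((Fintype.card X : ℝ) * (Fintype.card Y : ℝ)))
    (ε₁ ε₃ : ℝ) (hε₃ : 0 < ε₃) (hε₁ : ε₁ = ε₃ ^ ((1 : ℝ) / 12))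
    (hqr : (∑ x₁, ∑ x₂, ∑ y₁, ∑ y₂,
        (G x₁ y₁ - d) * (G x₁ y₂ - d) * (G x₂ y₁ - d) * (G x₂ y₂ - d)) /
        ((Fintype.card X : ℝ) ^ 2 * (Fintype.card Y : ℝ) ^ 2) < ε₃) :
    ∀ (X' : Finset X) (Y' : Finset Y),
      ε₁ * (Fintype.card X : ℝ) < X'.card → ε₁ * (Fintype.card Y : ℝ) < Y'.card →
      |(∑ x ∈ X', ∑ y ∈ Y', G x y) / ((X'.card : ℝ) * (Y'.card : ℝ)) - d| < ε₁ := by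
  intro X' Y' hX' hY'
  have hmpos : (0:ℝ) < (Fintype.card X : ℝ) := by positivity
  have hnpos : (0:ℝ) < (Fintype.card Y : ℝ) := by positivity
  set m : ℝ := (Fintype.card X : ℝ) with hm
  set n : ℝ := (Fintype.card Y : ℝ) with hn
  have hε₁pos : 0 < ε₁ := by rw [hε₁]; positivity
  have hX'pos : (0:ℝ) < X'.card := lt_trans (by positivity) hX'
  have hY'pos : (0:ℝ) < Y'.card := lt_trans (by positivity) hY'
  set f : X → Y → ℝ := fun x y => G x y - d with hfdef
  -- the C₄ count as a sum of squares
  set T : ℝ := ∑ y₁, ∑ y₂, (∑ x, f x y₁ * f x y₂) ^ 2 with hT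
  have hTeq : (∑ x₁, ∑ x₂, ∑ y₁, ∑ y₂,
      (G x₁ y₁ - d) * (G x₁ y₂ - d) * (G x₂ y₁ - d) * (G x₂ y₂ - d)) = T := by
    rw [hT]
    simp only [sq, Finset.sum_mul_sum]
    calc (∑ x₁, ∑ x₂, ∑ y₁, ∑ y₂,
          (G x₁ y₁ - d) * (G x₁ y₂ - d) * (G x₂ y₁ - d) * (G x₂ y₂ - d))
        = ∑ x₁, ∑ y₁, ∑ x₂, ∑ y₂,
          (G x₁ y₁ - d) * (G x₁ y₂ - d) * (G x₂ y₁ - d) * (G x₂ y₂ - d) :=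
          Finset.sum_congr rfl fun _ _ => Finset.sum_comm
      _ = ∑ y₁, ∑ x₁, ∑ x₂, ∑ y₂,
          (G x₁ y₁ - d) * (G x₁ y₂ - d) * (G x₂ y₁ - d) * (G x₂ y₂ - d) :=
          Finset.sum_comm
      _ = ∑ y₁, ∑ x₁, ∑ y₂, ∑ x₂,
          (G x₁ y₁ - d) * (G x₁ y₂ - d) * (G x₂ y₁ - d) * (G x₂ y₂ - d) :=
          Finset.sum_congr rfl fun _ _ => Finset.sum_congr rfl fun _ _ => Finset.sum_comm
      _ = ∑ y₁, ∑ y₂, ∑ x₁, ∑ x₂,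
          (G x₁ y₁ - d) * (G x₁ y₂ - d) * (G x₂ y₁ - d) * (G x₂ y₂ - d) :=
          Finset.sum_congr rfl fun _ _ => Finset.sum_comm
      _ = ∑ y₁, ∑ y₂, ∑ x₁, ∑ x₂, f x₁ y₁ * f x₁ y₂ * (f x₂ y₁ * f x₂ y₂) := by
          simp only [hfdef]
          exact Finset.sum_congr rfl fun _ _ => Finset.sum_congr rfl fun _ _ =>
            Finset.sum_congr rfl fun _ _ => Finset.sum_congr rfl fun _ _ => by ring
  have hTlt : T < ε₃ * (m ^ 2 * n ^ 2) := by
    rw [div_lt_iff₀ (by positivity)] at hqr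
    rwa [hTeq] at hqr
  set r : X → ℝ := fun x => ∑ y ∈ Y', f x y with hr
  set S : ℝ := ∑ x ∈ X', r x with hS
  set A : ℝ := ∑ x, (r x) ^ 2 with hA
  have hAnn : 0 ≤ A := Finset.sum_nonneg fun _ _ => sq_nonneg _
  have claim1 : S ^ 2 ≤ m * A := by
    calc S ^ 2 ≤ (X'.card : ℝ) * ∑ x ∈ X', (r x) ^ 2 := sq_sum_le_card_mul_sum_sq
      _ ≤ m * A := by
        apply mul_le_mul
        · rw [hm]; exact_mod_cast Finset.card_le_univ X'
        · exact Finset.sum_le_sum_of_subset_of_nonneg (Finset.subset_univ _)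
            fun _ _ _ => sq_nonneg _
        · exact Finset.sum_nonneg fun _ _ => sq_nonneg _
        · exact hmpos.le
  set g : Y → Y → ℝ := fun y₁ y₂ => ∑ x, f x y₁ * f x y₂ with hg
  have hArw : A = ∑ p ∈ Y' ×ˢ Y', g p.1 p.2 := by
    rw [hA, Finset.sum_product]
    simp only [hg, hr, sq, Finset.sum_mul_sum]
    rw [Finset.sum_comm]
    refine Finset.sum_congr rfl fun y₁ _ => ?_
    rw [Finset.sum_comm]
  have claim2 : A ^ 2 ≤ n ^ 2 * T := by
    rw [hArw]
    calc (∑ p ∈ Y' ×ˢ Y', g p.1 p.2) ^ 2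
        ≤ ((Y' ×ˢ Y').card : ℝ) * ∑ p ∈ Y' ×ˢ Y', (g p.1 p.2) ^ 2 :=
          sq_sum_le_card_mul_sum_sq
      _ ≤ n ^ 2 * ∑ p : Y × Y, (g p.1 p.2) ^ 2 := by
          apply mul_le_mul
          · rw [Finset.card_product]
            push_cast
            calc ((Y'.card : ℝ) * Y'.card) ≤ n * n := by
                  have h1 : (Y'.card : ℝ) ≤ n := by rw [hn]; exact_mod_cast Finset.card_le_univ Y'
                  exact mul_le_mul h1 h1 hY'pos.le hnpos.le
              _ = n ^ 2 := (sq n).symm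
          · exact Finset.sum_le_sum_of_subset_of_nonneg (Finset.subset_univ _)
              fun _ _ _ => sq_nonneg _
          · exact Finset.sum_nonneg fun _ _ => sq_nonneg _
          · positivity
      _ = n ^ 2 * T := by
          rw [hT, ← Finset.sum_product']
          rfl
  have hS4 : S ^ 4 < ε₃ * (m * n) ^ 4 := by
    have h1 : S ^ 4 ≤ m ^ 2 * A ^ 2 := by
      have := pow_le_pow_left₀ (sq_nonneg S) claim1 2
      calc S ^ 4 = (S ^ 2) ^ 2 := by ring
        _ ≤ (m * A) ^ 2 := this
        _ = m ^ 2 * A ^ 2 := by ring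
    have h2 : m ^ 2 * A ^ 2 ≤ m ^ 2 * (n ^ 2 * T) :=
      mul_le_mul_of_nonneg_left claim2 (by positivity)
    have h3 : m ^ 2 * (n ^ 2 * T) < m ^ 2 * (n ^ 2 * (ε₃ * (m ^ 2 * n ^ 2))) := by
      apply mul_lt_mul_of_pos_left _ (by positivity)
      exact mul_lt_mul_of_pos_left hTlt (by positivity)
    calc S ^ 4 ≤ m ^ 2 * A ^ 2 := h1
      _ ≤ m ^ 2 * (n ^ 2 * T) := h2
      _ < m ^ 2 * (n ^ 2 * (ε₃ * (m ^ 2 * n ^ 2))) := h3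
      _ = ε₃ * (m * n) ^ 4 := by ring
  have hε₁cube : ε₁ ^ 3 = ε₃ ^ ((1:ℝ)/4) := by
    rw [hε₁, ← Real.rpow_natCast (ε₃ ^ ((1:ℝ)/12)) 3, ← Real.rpow_mul hε₃.le]
    norm_num
  have habs : |S| < ε₁ ^ 3 * (m * n) := by
    have hrhs : (0:ℝ) ≤ ε₁ ^ 3 * (m * n) := by positivity
    refine lt_of_pow_lt_pow_left₀ 4 hrhs ?_
    calc |S| ^ 4 = S ^ 4 := by
          rw [← abs_pow, abs_of_nonneg (by positivity)]
      _ < ε₃ * (m * n) ^ 4 := hS4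
      _ = (ε₁ ^ 3 * (m * n)) ^ 4 := by
          have h4 : (ε₃ ^ ((1:ℝ)/4)) ^ (4:ℕ) = ε₃ := by
            rw [← Real.rpow_natCast (ε₃ ^ ((1:ℝ)/4)) 4, ← Real.rpow_mul hε₃.le]
            norm_num
          conv_rhs => rw [mul_pow]
          rw [hε₁cube, h4]
  have hc : (0:ℝ) < (X'.card : ℝ) * Y'.card := by positivity
  have hsum : S = (∑ x ∈ X', ∑ y ∈ Y', G x y) - d * ((X'.card : ℝ) * Y'.card) := by
    calc S = ∑ x ∈ X', ∑ y ∈ Y', (G x y - d) := rfl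
      _ = ∑ x ∈ X', ((∑ y ∈ Y', G x y) - Y'.card • d) := by
          refine Finset.sum_congr rfl fun x _ => ?_
          rw [Finset.sum_sub_distrib, Finset.sum_const]
      _ = (∑ x ∈ X', ∑ y ∈ Y', G x y) - X'.card • (Y'.card • d) := by
          rw [Finset.sum_sub_distrib, Finset.sum_const]
      _ = (∑ x ∈ X', ∑ y ∈ Y', G x y) - d * ((X'.card : ℝ) * Y'.card) := by
          rw [nsmul_eq_mul, nsmul_eq_mul]; ring
  have hgoal : (∑ x ∈ X', ∑ y ∈ Y', G x y) / ((X'.card : ℝ) * Y'.card) - d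
      = S / ((X'.card : ℝ) * Y'.card) := by
    rw [hsum, sub_div, mul_div_assoc, div_self hc.ne', mul_one]
  rw [hgoal, abs_div, abs_of_pos hc, div_lt_iff₀ hc]
  calc |S| < ε₁ ^ 3 * (m * n) := habs
    _ = ε₁ * (ε₁ * m * (ε₁ * n)) := by ring
    _ ≤ ε₁ * ((X'.card : ℝ) * (ε₁ * n)) := by
        apply mul_le_mul_of_nonneg_left _ hε₁pos.le
        exact mul_le_mul_of_nonneg_right hX'.le (by positivity)
    _ < ε₁ * ((X'.card : ℝ) * Y'.card) := by
        apply mul_lt_mul_of_pos_left _ hε₁pos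
        exact mul_lt_mul_of_pos_left hY' hX'pos
end

section
/- Let G be an ε-regular bipartite graph with parts X, Y, each of size at least n, and density d, where 0 < 1/n ≪ ε ≪ d. Then the C₄-homomorphism density satisfies d_{C₄}(G) = d⁴ ± 10ε, i.e. |d_{C₄}(G) − d⁴| ≤ 10ε. -/
open Finset

set_option maxHeartbeats 4000000

/-- Counting 4-cycles in regular bipartite graphs: for `0 < 1/n ≪ ε ≪ d`, if `G`
is an `ε`-regular bipartite graph with parts of size at least `n` and density
`d`, then `|d_{C₄}(G) - d⁴| ≤ 10 ε`. -/
theorem c4_count_of_regular :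
    ∀ d : ℝ, 0 < d → d ≤ 1 →
    ∃ ε₀ : ℝ, 0 < ε₀ ∧ ∀ ε : ℝ, 0 < ε → ε < ε₀ →
    ∃ n₀ : ℕ, ∀ (X Y : Type) [Fintype X] [Fintype Y],
      n₀ ≤ Fintype.card X → n₀ ≤ Fintype.card Y →
      ∀ G : X → Y → ℝ, (∀ x y, G x y = 0 ∨ G x y = 1) →
      d = (∑ x, ∑ y, G x y) / ((Fintype.card X : ℝ) * (Fintype.card Y : ℝ)) →
      (∀ (X' : Finset X) (Y' : Finset Y),
        ε * (Fintype.card X : ℝ) < X'.card → ε * (Fintype.card Y : ℝ) < Y'.card →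
        |(∑ x ∈ X', ∑ y ∈ Y', G x y) / ((X'.card : ℝ) * (Y'.card : ℝ)) - d| < ε) →
      |(∑ x₁, ∑ x₂, ∑ y₁, ∑ y₂, G x₁ y₁ * G x₁ y₂ * G x₂ y₁ * G x₂ y₂) /
          ((Fintype.card X : ℝ) ^ 2 * (Fintype.card Y : ℝ) ^ 2) - d ^ 4| ≤ 10 * ε := by
  intro d hd0 hd1
  refine ⟨min (d/2) (1/10), lt_min (by linarith) (by norm_num), ?_⟩
  intro ε hε hεlt
  have hεd : ε < d/2 := hεlt.trans_le (min_le_left _ _)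
  have hε10 : ε < 1/10 := hεlt.trans_le (min_le_right _ _)
  refine ⟨1, ?_⟩
  intro X Y _ _ hX hY G h01 _hdens reg
  classical
  set M : ℝ := (Fintype.card X : ℝ) with hM_def
  set N : ℝ := (Fintype.card Y : ℝ) with hN_def
  have hM1 : (1:ℝ) ≤ M := by rw [hM_def]; exact_mod_cast hX
  have hN1 : (1:ℝ) ≤ N := by rw [hN_def]; exact_mod_cast hY
  have hM0 : (0:ℝ) < M := by linarith
  have hN0 : (0:ℝ) < N := by linarith
  have hG0 : ∀ x y, 0 ≤ G x y := by
    intro x y; rcases h01 x y with h | h <;> rw [h] <;> norm_num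
  have hG1 : ∀ x y, G x y ≤ 1 := by
    intro x y; rcases h01 x y with h | h <;> rw [h] <;> norm_num
  -- the "few dense / few sparse rows" lemma
  have few_dense : ∀ Y' : Finset Y, ε * N < Y'.card →
      (((univ : Finset X).filter
        (fun x => (d + ε) * (Y'.card : ℝ) ≤ ∑ y ∈ Y', G x y)).card : ℝ) ≤ ε * M := by
    intro Y' hY'
    by_contra hcon
    push_neg at hcon
    set A := (univ : Finset X).filter
        (fun x => (d + ε) * (Y'.card : ℝ) ≤ ∑ y ∈ Y', G x y) with hA_def
    have hA0 : (0:ℝ) < A.card := lt_trans (by positivity) hcon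
    have hY'0 : (0:ℝ) < Y'.card := lt_trans (by positivity) hY'
    have hreg := reg A Y' hcon hY'
    have hS : (d + ε) * ((A.card : ℝ) * Y'.card) ≤ ∑ x ∈ A, ∑ y ∈ Y', G x y := by
      calc (d + ε) * ((A.card : ℝ) * Y'.card)
          = ∑ _x ∈ A, (d + ε) * (Y'.card : ℝ) := by
            rw [Finset.sum_const, nsmul_eq_mul]; ring
        _ ≤ ∑ x ∈ A, ∑ y ∈ Y', G x y := by
            refine Finset.sum_le_sum ?_
            intro x hx
            exact (Finset.mem_filter.mp hx).2
    have hdiv : d + ε ≤ (∑ x ∈ A, ∑ y ∈ Y', G x y) / ((A.card : ℝ) * Y'.card) := by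
      rw [le_div_iff₀ (mul_pos hA0 hY'0)]
      linarith
    have := abs_lt.mp hreg
    linarith [this.2]
  have few_sparse : ∀ Y' : Finset Y, ε * N < Y'.card →
      (((univ : Finset X).filter
        (fun x => ∑ y ∈ Y', G x y ≤ (d - ε) * (Y'.card : ℝ))).card : ℝ) ≤ ε * M := by
    intro Y' hY'
    by_contra hcon
    push_neg at hcon
    set A := (univ : Finset X).filter
        (fun x => ∑ y ∈ Y', G x y ≤ (d - ε) * (Y'.card : ℝ)) with hA_def
    have hA0 : (0:ℝ) < A.card := lt_trans (by positivity) hcon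
    have hY'0 : (0:ℝ) < Y'.card := lt_trans (by positivity) hY'
    have hreg := reg A Y' hcon hY'
    have hS : ∑ x ∈ A, ∑ y ∈ Y', G x y ≤ (d - ε) * ((A.card : ℝ) * Y'.card) := by
      calc ∑ x ∈ A, ∑ y ∈ Y', G x y
          ≤ ∑ _x ∈ A, (d - ε) * (Y'.card : ℝ) := by
            refine Finset.sum_le_sum ?_
            intro x hx
            exact (Finset.mem_filter.mp hx).2
        _ = (d - ε) * ((A.card : ℝ) * Y'.card) := by
            rw [Finset.sum_const, nsmul_eq_mul]; ring
    have hdiv : (∑ x ∈ A, ∑ y ∈ Y', G x y) / ((A.card : ℝ) * Y'.card) ≤ d - ε := by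
      rw [div_le_iff₀ (mul_pos hA0 hY'0)]
      linarith
    have := abs_lt.mp hreg
    linarith [this.1]
  -- neighborhoods and codegrees
  set Nb : X → Finset Y := fun x => (univ : Finset Y).filter (fun y => G x y = 1) with hNb_def
  have cardNb : ∀ x, ((Nb x).card : ℝ) = ∑ y, G x y := by
    intro x
    simp only [hNb_def]
    rw [Finset.card_filter]
    push_cast
    refine Finset.sum_congr rfl ?_
    intro y _
    rcases h01 x y with h | h <;> simp [h]
  set c : X → X → ℝ := fun x₁ x₂ => ∑ y, G x₁ y * G x₂ y with hc_def
  have sumNb : ∀ x₁ x₂, ∑ y ∈ Nb x₁, G x₂ y = c x₁ x₂ := by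
    intro x₁ x₂
    simp only [hNb_def, hc_def]
    rw [Finset.sum_filter]
    refine Finset.sum_congr rfl ?_
    intro y _
    rcases h01 x₁ y with h | h <;> simp [h]
  have hc0 : ∀ x₁ x₂, 0 ≤ c x₁ x₂ := by
    intro x₁ x₂
    simp only [hc_def]
    exact Finset.sum_nonneg fun y _ => mul_nonneg (hG0 _ _) (hG0 _ _)
  have hcN : ∀ x₁ x₂, c x₁ x₂ ≤ N := by
    intro x₁ x₂
    simp only [hc_def]
    calc ∑ y, G x₁ y * G x₂ y ≤ ∑ _y : Y, (1:ℝ) :=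
          Finset.sum_le_sum fun y _ => mul_le_one₀ (hG1 _ _) (hG0 _ _) (hG1 _ _)
      _ = N := by rw [Finset.sum_const, Finset.card_univ, nsmul_eq_mul, mul_one, hN_def]
  have hNcast : (((univ : Finset Y)).card : ℝ) = N := by rw [Finset.card_univ]
  have hMcast : (((univ : Finset X)).card : ℝ) = M := by rw [Finset.card_univ]
  -- good vertices
  set p : X → Prop := fun x => (d - ε) * N < ∑ y, G x y ∧ ∑ y, G x y < (d + ε) * N with hp_def
  set goodX : Finset X := (univ : Finset X).filter p with hgood_def
  have hεN : ε * N < ((univ : Finset Y).card : ℝ) := by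
    rw [hNcast]; nlinarith
  have hbadX : (((univ : Finset X).filter (fun x => ¬ p x)).card : ℝ) ≤ 2 * (ε * M) := by
    have hsub : (univ : Finset X).filter (fun x => ¬ p x) ⊆
        ((univ : Finset X).filter
          (fun x => (d + ε) * (((univ : Finset Y)).card : ℝ) ≤ ∑ y ∈ (univ : Finset Y), G x y)) ∪
        ((univ : Finset X).filter
          (fun x => ∑ y ∈ (univ : Finset Y), G x y ≤ (d - ε) * (((univ : Finset Y)).card : ℝ))) := by
      intro x hx
      simp only [hp_def, Finset.mem_filter, Finset.mem_union, Finset.mem_univ, true_and,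
        hNcast] at hx ⊢
      push_neg at hx
      by_cases h : (d - ε) * N < ∑ y, G x y
      · left; exact hx h
      · right; exact le_of_not_gt h
    have h1 := few_dense univ hεN
    have h2 := few_sparse univ hεN
    have h3 : (((univ : Finset X).filter (fun x => ¬ p x)).card : ℝ) ≤
        ((((univ : Finset X).filter
          (fun x => (d + ε) * (((univ : Finset Y)).card : ℝ) ≤ ∑ y ∈ (univ : Finset Y), G x y)).card : ℝ)
        + (((univ : Finset X).filter
          (fun x => ∑ y ∈ (univ : Finset Y), G x y ≤ (d - ε) * (((univ : Finset Y)).card : ℝ))).card : ℝ)) := by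
      have := (Finset.card_le_card hsub).trans (Finset.card_union_le _ _)
      exact_mod_cast this
    linarith
  have hgoodcard : M - 2 * (ε * M) ≤ (goodX.card : ℝ) := by
    have hsplit := Finset.card_filter_add_card_filter_not
      (s := (univ : Finset X)) (p := p)
    have hcast : (goodX.card : ℝ) + (((univ : Finset X).filter (fun x => ¬ p x)).card : ℝ) = M := by
      have hnat : goodX.card + ((univ : Finset X).filter (fun x => ¬ p x)).card = Fintype.card X := by
        rw [hgood_def]
        exact hsplit.trans Finset.card_univ
      rw [hM_def]
      exact_mod_cast hnat
    linarith
  have hde : 0 < d - ε := by linarith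
  have hdpε : 0 < d + ε := by linarith
  -- bad pair sets
  set B : X → Finset X := fun x₁ =>
    ((univ : Finset X).filter (fun x => (d + ε) * (((Nb x₁)).card : ℝ) ≤ ∑ y ∈ Nb x₁, G x y)) ∪
    ((univ : Finset X).filter (fun x => ∑ y ∈ Nb x₁, G x y ≤ (d - ε) * (((Nb x₁)).card : ℝ)))
    with hB_def
  have hεNb : ∀ x₁ ∈ goodX, ε * N < ((Nb x₁).card : ℝ) := by
    intro x₁ hx₁
    have h := (Finset.mem_filter.mp hx₁).2
    simp only [hp_def] at h
    rw [cardNb x₁]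
    nlinarith [h.1]
  have hBcard : ∀ x₁ ∈ goodX, ((B x₁).card : ℝ) ≤ 2 * (ε * M) := by
    intro x₁ hx₁
    have h1 := few_dense (Nb x₁) (hεNb x₁ hx₁)
    have h2 := few_sparse (Nb x₁) (hεNb x₁ hx₁)
    have hnat := Finset.card_union_le
      ((univ : Finset X).filter (fun x => (d + ε) * (((Nb x₁)).card : ℝ) ≤ ∑ y ∈ Nb x₁, G x y))
      ((univ : Finset X).filter (fun x => ∑ y ∈ Nb x₁, G x y ≤ (d - ε) * (((Nb x₁)).card : ℝ)))
    have hcast : ((B x₁).card : ℝ) ≤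
        ((((univ : Finset X).filter
            (fun x => (d + ε) * (((Nb x₁)).card : ℝ) ≤ ∑ y ∈ Nb x₁, G x y)).card : ℝ)
          + (((univ : Finset X).filter
            (fun x => ∑ y ∈ Nb x₁, G x y ≤ (d - ε) * (((Nb x₁)).card : ℝ))).card : ℝ)) := by
      simp only [hB_def]
      exact_mod_cast hnat
    linarith
  have hcbound : ∀ x₁ ∈ goodX, ∀ x₂ ∈ (univ : Finset X) \ B x₁,
      (d - ε)^2 * N ≤ c x₁ x₂ ∧ c x₁ x₂ ≤ (d + ε)^2 * N := by
    intro x₁ hx₁ x₂ hx₂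
    have hp₁ := (Finset.mem_filter.mp hx₁).2
    simp only [hp_def] at hp₁
    have hNlo : (d - ε) * N < ((Nb x₁).card : ℝ) := by rw [cardNb]; exact hp₁.1
    have hNhi : ((Nb x₁).card : ℝ) < (d + ε) * N := by rw [cardNb]; exact hp₁.2
    rw [Finset.mem_sdiff] at hx₂
    have hx₂' := hx₂.2
    simp only [hB_def, Finset.mem_union, Finset.mem_filter, Finset.mem_univ, true_and,
      not_or, not_le] at hx₂'
    obtain ⟨hhi, hlo⟩ := hx₂'
    rw [sumNb x₁ x₂] at hhi hlo
    constructor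
    · nlinarith
    · nlinarith
  -- rewrite the quadruple sum as a sum of squared codegrees
  have hT : (∑ x₁, ∑ x₂, ∑ y₁, ∑ y₂, G x₁ y₁ * G x₁ y₂ * G x₂ y₁ * G x₂ y₂)
      = ∑ x₁, ∑ x₂, c x₁ x₂ ^ 2 := by
    refine Finset.sum_congr rfl fun x₁ _ => Finset.sum_congr rfl fun x₂ _ => ?_
    simp only [hc_def]
    rw [sq, Finset.sum_mul_sum]
    exact Finset.sum_congr rfl fun y₁ _ => Finset.sum_congr rfl fun y₂ _ => by ring
  have hsq_le : ∀ x₁ x₂, c x₁ x₂ ^ 2 ≤ N ^ 2 := fun x₁ x₂ =>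
    pow_le_pow_left₀ (hc0 x₁ x₂) (hcN x₁ x₂) 2
  -- upper bound
  have hub : ∑ x₁, ∑ x₂, c x₁ x₂ ^ 2 ≤ ((d + ε)^4 + 4 * ε) * (M^2 * N^2) := by
    have hsplit : ∑ x₁, ∑ x₂, c x₁ x₂ ^ 2 =
        (∑ x₁ ∈ univ \ goodX, ∑ x₂, c x₁ x₂ ^ 2) + ∑ x₁ ∈ goodX, ∑ x₂, c x₁ x₂ ^ 2 :=
      (Finset.sum_sdiff (Finset.subset_univ _)).symm
    have hbad1 : ∑ x₁ ∈ univ \ goodX, ∑ x₂, c x₁ x₂ ^ 2 ≤ 2 * (ε * M) * (M * N^2) := by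
      have hinner : ∀ x₁ : X, ∑ x₂, c x₁ x₂ ^ 2 ≤ M * N^2 := by
        intro x₁
        calc ∑ x₂, c x₁ x₂ ^ 2 ≤ ∑ _x₂ : X, N^2 := Finset.sum_le_sum fun x₂ _ => hsq_le x₁ x₂
          _ = M * N^2 := by rw [Finset.sum_const, Finset.card_univ, nsmul_eq_mul, hM_def]
      have hcard : ((univ \ goodX).card : ℝ) ≤ 2 * (ε * M) := by
        have heq : (univ : Finset X) \ goodX = (univ : Finset X).filter (fun x => ¬ p x) := by
          rw [hgood_def, Finset.filter_not]
        rw [heq]; exact hbadX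
      calc ∑ x₁ ∈ univ \ goodX, ∑ x₂, c x₁ x₂ ^ 2
          ≤ ∑ _x₁ ∈ univ \ goodX, M * N^2 := Finset.sum_le_sum fun x₁ _ => hinner x₁
        _ = ((univ \ goodX).card : ℝ) * (M * N^2) := by rw [Finset.sum_const, nsmul_eq_mul]
        _ ≤ 2 * (ε * M) * (M * N^2) := by nlinarith [sq_nonneg N, mul_pos hM0 (mul_pos hN0 hN0)]
    have hgood1 : ∑ x₁ ∈ goodX, ∑ x₂, c x₁ x₂ ^ 2 ≤
        M * (2 * (ε * M) * N^2 + M * ((d + ε)^4 * N^2)) := by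
      have hinner : ∀ x₁ ∈ goodX,
          ∑ x₂, c x₁ x₂ ^ 2 ≤ 2 * (ε * M) * N^2 + M * ((d + ε)^4 * N^2) := by
        intro x₁ hx₁
        have hsp : ∑ x₂, c x₁ x₂ ^ 2 =
            (∑ x₂ ∈ univ \ B x₁, c x₁ x₂ ^ 2) + ∑ x₂ ∈ B x₁, c x₁ x₂ ^ 2 :=
          (Finset.sum_sdiff (Finset.subset_univ _)).symm
        have h1 : ∑ x₂ ∈ B x₁, c x₁ x₂ ^ 2 ≤ 2 * (ε * M) * N^2 := by
          calc ∑ x₂ ∈ B x₁, c x₁ x₂ ^ 2 ≤ ∑ _x₂ ∈ B x₁, N^2 :=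
                Finset.sum_le_sum fun x₂ _ => hsq_le x₁ x₂
            _ = ((B x₁).card : ℝ) * N^2 := by rw [Finset.sum_const, nsmul_eq_mul]
            _ ≤ 2 * (ε * M) * N^2 := by nlinarith [hBcard x₁ hx₁, sq_nonneg N]
        have h2 : ∑ x₂ ∈ univ \ B x₁, c x₁ x₂ ^ 2 ≤ M * ((d + ε)^4 * N^2) := by
          have hbnd : ∀ x₂ ∈ univ \ B x₁, c x₁ x₂ ^ 2 ≤ (d + ε)^4 * N^2 := by
            intro x₂ hx₂
            have h := (hcbound x₁ hx₁ x₂ hx₂).2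
            have h0 := hc0 x₁ x₂
            nlinarith
          have hcle : (((univ \ B x₁)).card : ℝ) ≤ M := by
            rw [hM_def]
            exact_mod_cast (Finset.card_le_card (Finset.subset_univ _)).trans_eq
              Finset.card_univ
          calc ∑ x₂ ∈ univ \ B x₁, c x₁ x₂ ^ 2
              ≤ ∑ _x₂ ∈ univ \ B x₁, (d + ε)^4 * N^2 := Finset.sum_le_sum hbnd
            _ = (((univ \ B x₁)).card : ℝ) * ((d + ε)^4 * N^2) := by
                rw [Finset.sum_const, nsmul_eq_mul]
            _ ≤ M * ((d + ε)^4 * N^2) := by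
                have hnn : (0:ℝ) ≤ (d + ε)^4 * N^2 :=
                  mul_nonneg (pow_nonneg hdpε.le 4) (sq_nonneg N)
                nlinarith
        rw [hsp]; linarith
      have hgle : (goodX.card : ℝ) ≤ M := by
        rw [hM_def]
        exact_mod_cast (Finset.card_le_card (Finset.subset_univ _)).trans_eq Finset.card_univ
      have hpos : (0:ℝ) ≤ 2 * (ε * M) * N^2 + M * ((d + ε)^4 * N^2) := by
        have a1 : (0:ℝ) ≤ 2 * (ε * M) * N^2 :=
          mul_nonneg (by nlinarith) (sq_nonneg N)
        have a2 : (0:ℝ) ≤ M * ((d + ε)^4 * N^2) :=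
          mul_nonneg hM0.le (mul_nonneg (pow_nonneg hdpε.le 4) (sq_nonneg N))
        linarith
      calc ∑ x₁ ∈ goodX, ∑ x₂, c x₁ x₂ ^ 2
          ≤ ∑ _x₁ ∈ goodX, (2 * (ε * M) * N^2 + M * ((d + ε)^4 * N^2)) :=
            Finset.sum_le_sum hinner
        _ = (goodX.card : ℝ) * (2 * (ε * M) * N^2 + M * ((d + ε)^4 * N^2)) := by
            rw [Finset.sum_const, nsmul_eq_mul]
        _ ≤ M * (2 * (ε * M) * N^2 + M * ((d + ε)^4 * N^2)) := by nlinarith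
    have hring : 2 * (ε * M) * (M * N^2) + M * (2 * (ε * M) * N^2 + M * ((d + ε)^4 * N^2))
        = ((d + ε)^4 + 4 * ε) * (M^2 * N^2) := by ring
    rw [hsplit]
    linarith
  -- lower bound
  have hlb : ((d - ε)^4 - 4 * ε) * (M^2 * N^2) ≤ ∑ x₁, ∑ x₂, c x₁ x₂ ^ 2 := by
    have key : ∀ x₁ ∈ goodX,
        (M - 2 * (ε * M)) * ((d - ε)^4 * N^2) ≤ ∑ x₂, c x₁ x₂ ^ 2 := by
      intro x₁ hx₁
      have hcard : M - 2 * (ε * M) ≤ (((univ \ B x₁)).card : ℝ) := by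
        have hnat := Finset.card_sdiff_add_card_eq_card (Finset.subset_univ (B x₁))
        have hcast : (((univ \ B x₁)).card : ℝ) + ((B x₁).card : ℝ) = M := by
          rw [hM_def]
          exact_mod_cast hnat.trans Finset.card_univ
        linarith [hBcard x₁ hx₁]
      have hlow : ∀ x₂ ∈ univ \ B x₁, (d - ε)^4 * N^2 ≤ c x₁ x₂ ^ 2 := by
        intro x₂ hx₂
        have h := (hcbound x₁ hx₁ x₂ hx₂).1
        have hnn2 : (0:ℝ) ≤ (d - ε)^2 * N := mul_nonneg (sq_nonneg _) hN0.le
        nlinarith [mul_self_le_mul_self hnn2 h]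
      have hnn : (0:ℝ) ≤ (d - ε)^4 * N^2 := mul_nonneg (pow_nonneg hde.le 4) (sq_nonneg N)
      calc (M - 2 * (ε * M)) * ((d - ε)^4 * N^2)
          ≤ (((univ \ B x₁)).card : ℝ) * ((d - ε)^4 * N^2) := by nlinarith
        _ = ∑ _x₂ ∈ univ \ B x₁, (d - ε)^4 * N^2 := by rw [Finset.sum_const, nsmul_eq_mul]
        _ ≤ ∑ x₂ ∈ univ \ B x₁, c x₁ x₂ ^ 2 := Finset.sum_le_sum hlow
        _ ≤ ∑ x₂, c x₁ x₂ ^ 2 := Finset.sum_le_sum_of_subset_of_nonneg (Finset.subset_univ _)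
              (fun x₂ _ _ => sq_nonneg _)
    have hstep : (goodX.card : ℝ) * ((M - 2 * (ε * M)) * ((d - ε)^4 * N^2))
        ≤ ∑ x₁ ∈ goodX, ∑ x₂, c x₁ x₂ ^ 2 := by
      calc (goodX.card : ℝ) * ((M - 2 * (ε * M)) * ((d - ε)^4 * N^2))
          = ∑ _x₁ ∈ goodX, ((M - 2 * (ε * M)) * ((d - ε)^4 * N^2)) := by
            rw [Finset.sum_const, nsmul_eq_mul]
        _ ≤ ∑ x₁ ∈ goodX, ∑ x₂, c x₁ x₂ ^ 2 := Finset.sum_le_sum key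
    have hall : ∑ x₁ ∈ goodX, ∑ x₂, c x₁ x₂ ^ 2 ≤ ∑ x₁, ∑ x₂, c x₁ x₂ ^ 2 :=
      Finset.sum_le_sum_of_subset_of_nonneg (Finset.subset_univ _)
        (fun x₁ _ _ => Finset.sum_nonneg fun x₂ _ => sq_nonneg _)
    have h2ε : (0:ℝ) ≤ M - 2 * (ε * M) := by nlinarith
    have hbpos : (0:ℝ) ≤ (M - 2 * (ε * M)) * ((d - ε)^4 * N^2) :=
      mul_nonneg h2ε (mul_nonneg (pow_nonneg hde.le 4) (sq_nonneg N))
    have hmul := mul_le_mul_of_nonneg_right hgoodcard hbpos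
    have hde1 : (d - ε)^4 ≤ 1 := pow_le_one₀ hde.le (by linarith)
    have hscalar : (d - ε)^4 - 4 * ε ≤ (1 - 2 * ε)^2 * (d - ε)^4 := by
      have hkey : (1 - 2*ε)^2 * (d - ε)^4 - ((d - ε)^4 - 4*ε)
          = 4*(ε*(1 - (d - ε)^4)) + 4*((ε*ε)*(d - ε)^4) := by ring
      linarith [mul_nonneg hε.le (sub_nonneg.mpr hde1),
        mul_nonneg (mul_nonneg hε.le hε.le) (pow_nonneg hde.le 4)]
    have hfin : ((d - ε)^4 - 4 * ε) * (M^2 * N^2)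
        ≤ (M - 2 * (ε * M)) * ((M - 2 * (ε * M)) * ((d - ε)^4 * N^2)) := by
      have hKpos : (0:ℝ) ≤ M^2 * N^2 := by positivity
      have := mul_le_mul_of_nonneg_right hscalar hKpos
      nlinarith [this]
    linarith
  -- conclusion
  have hMN : (0:ℝ) < M^2 * N^2 := by positivity
  rw [hT, abs_le]
  have hA : (∑ x₁, ∑ x₂, c x₁ x₂ ^ 2) / (M^2 * N^2) ≤ (d + ε)^4 + 4 * ε := by
    rw [div_le_iff₀ hMN]; linarith
  have hB2 : (d - ε)^4 - 4 * ε ≤ (∑ x₁, ∑ x₂, c x₁ x₂ ^ 2) / (M^2 * N^2) := by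
    rw [le_div_iff₀ hMN]; linarith
  have hd2 : d^2 ≤ 1 := by nlinarith
  have hd3 : d^3 ≤ 1 := by nlinarith
  have hd3ε : d^3 * ε ≤ 1 * ε := mul_le_mul_of_nonneg_right hd3 hε.le
  have hd2ε2 : d^2 * ε^2 ≤ 1 * ε^2 := mul_le_mul_of_nonneg_right hd2 (sq_nonneg ε)
  have hdε3 : d * ε^3 ≤ 1 * ε^3 := mul_le_mul_of_nonneg_right hd1 (pow_nonneg hε.le 3)
  have hε2 : ε^2 ≤ (1/10) * ε := by nlinarith
  have hε3 : ε^3 ≤ (1/10) * ε^2 := by nlinarith [sq_nonneg ε]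
  have hε4 : ε^4 ≤ (1/10) * ε^3 := by nlinarith [pow_nonneg hε.le 3]
  have hε3nn : (0:ℝ) ≤ ε^3 := pow_nonneg hε.le 3
  have hε4nn : (0:ℝ) ≤ ε^4 := pow_nonneg hε.le 4
  have hd2ε2nn : (0:ℝ) ≤ d^2 * ε^2 := mul_nonneg (sq_nonneg d) (sq_nonneg ε)
  have hdε3nn : (0:ℝ) ≤ d * ε^3 := mul_nonneg hd0.le hε3nn
  have e1 : (d + ε)^4 - d^4 ≤ 6 * ε := by
    have hexp : (d + ε)^4 - d^4 = 4*(d^3*ε) + 6*(d^2*ε^2) + 4*(d*ε^3) + ε^4 := by ring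
    linarith
  have e2 : d^4 - (d - ε)^4 ≤ 6 * ε := by
    have hexp : d^4 - (d - ε)^4 = 4*(d^3*ε) - 6*(d^2*ε^2) + 4*(d*ε^3) - ε^4 := by ring
    linarith
  constructor
  · linarith
  · linarith
end

section
/- Let H be a 4-graph on a vertex set X = X₀ ∪ X₁ with |X₀| = |X₁| = n/2 (n even, n large), such that: (i) every 4-tuple with exactly 3 points in one Xᵢ and 1 point in X_{1-i} is an edge; (ii) for every pair {a,b} ⊆ X₀, the graph G_{a,b} = {e ∈ C(X₁,2) : {a,b} ∪ e ∈ E(H)} has minimum degree at least 2 on X₁; and (iii) there exist three points a,b,c ∈ X₀ and a matching e₁,e₂,e₃ in X₁ with e₁ ∈ G_{b,c}, e₂ ∈ G_{a,c}, e₃ ∈ G_{a,b}. Then H contains a copy of PG₂(3). -/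
set_option maxHeartbeats 4000000


open scoped LinearAlgebra.Projectivization

instance : Fact (Nat.Prime 3) := ⟨by norm_num⟩

/-- The point set of `PG₂(3)`: the projective plane over `F₃`. -/
abbrev PG23 := ℙ (ZMod 3) (Fin 3 → ZMod 3)

/-- The set of points on the line through two points. -/
def lineThrough (a b : PG23) : Set PG23 :=
  {c | c.submodule ≤ a.submodule ⊔ b.submodule}

/-- `L` is a line of `PG₂(3)`. -/
def IsLine (L : Set PG23) : Prop := ∃ a b : PG23, a ≠ b ∧ L = lineThrough a b

/-- A 4-graph `H` contains a copy of `PG₂(3)` if there is an injective map from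
the points of `PG₂(3)` carrying every line to an edge of `H`. -/
def ContainsPG23 {X : Type*} [DecidableEq X] (H : Finset (Finset X)) : Prop :=
  ∃ φ : PG23 → X, Function.Injective φ ∧
    ∀ L : Finset PG23, IsLine (↑L : Set PG23) → L.image φ ∈ H

noncomputable instance : DecidableEq PG23 := Classical.decEq _

abbrev V3 := Fin 3 → ZMod 3

def pts : Fin 13 → V3 :=
  ![![1,0,0], ![0,1,0], ![0,0,1], ![1,1,1], ![1,1,2], ![1,2,1], ![1,2,2],
    ![1,1,0], ![1,2,0], ![1,0,1], ![1,0,2], ![0,1,1], ![0,1,2]]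

def lns : Fin 13 → Fin 4 → Fin 13 :=
  ![![1,2,11,12], ![0,2,9,10], ![0,1,7,8],
    ![2,5,6,8], ![2,3,4,7], ![1,4,6,10], ![1,3,5,9], ![0,4,5,12], ![0,3,6,11],
    ![3,8,10,12], ![4,8,9,11], ![5,7,10,11], ![6,7,9,12]]

lemma pts_ne_zero : ∀ k, pts k ≠ 0 := by decide

noncomputable def Pmk (k : Fin 13) : PG23 := Projectivization.mk (ZMod 3) (pts k) (pts_ne_zero k)

lemma D1 : ∀ (i : Fin 13) (jp kp : Fin 4), jp ≠ kp →
    ∀ m : Fin 13, ((∃ s t : ZMod 3, s • pts (lns i jp) + t • pts (lns i kp) = pts m) ↔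
      ∃ p : Fin 4, lns i p = m) := by decide

lemma D2 : ∀ j k : Fin 13, j ≠ k → ∃ (i : Fin 13) (jp kp : Fin 4),
    lns i jp = j ∧ lns i kp = k := by decide

lemma D3 : ∀ v : V3, v ≠ 0 → ∃ (k : Fin 13) (c : ZMod 3), c • pts k = v := by decide

lemma D4 : ∀ j k : Fin 13, (∃ a : ZMod 3, a • pts k = pts j) → j = k := by decide

lemma Pmk_total : ∀ P : PG23, ∃ k, Pmk k = P := by
  intro P
  induction P using Projectivization.ind with
  | h v hv =>
    obtain ⟨k, c, hc⟩ := D3 v hv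
    exact ⟨k, ((Projectivization.mk_eq_mk_iff' (ZMod 3) v (pts k) hv (pts_ne_zero k)).mpr
      ⟨c, hc⟩).symm⟩

lemma Pmk_inj : Function.Injective Pmk := by
  intro j k h
  rw [Pmk, Pmk, Projectivization.mk_eq_mk_iff'] at h
  exact D4 j k h

lemma mem_lineThrough_iff (j k m : Fin 13) :
    Pmk m ∈ lineThrough (Pmk j) (Pmk k) ↔
      ∃ s t : ZMod 3, s • pts j + t • pts k = pts m := by
  show (Pmk m).submodule ≤ (Pmk j).submodule ⊔ (Pmk k).submodule ↔ _
  rw [Pmk, Pmk, Pmk, Projectivization.submodule_mk, Projectivization.submodule_mk,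
    Projectivization.submodule_mk, Submodule.span_singleton_le_iff_mem,
    ← Submodule.span_insert]
  exact Submodule.mem_span_pair

lemma isLine_classify {L : Set PG23} (hL : IsLine L) :
    ∃ i : Fin 13, L = {P | ∃ p : Fin 4, Pmk (lns i p) = P} := by
  obtain ⟨a, b, hab, rfl⟩ := hL
  obtain ⟨j, rfl⟩ := Pmk_total a
  obtain ⟨k, rfl⟩ := Pmk_total b
  have hjk : j ≠ k := fun h => hab (by rw [h])
  obtain ⟨i, jp, kp, hj, hk⟩ := D2 j k hjk
  have hpk : jp ≠ kp := by rintro rfl; exact hjk (hj.symm.trans hk)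
  refine ⟨i, Set.ext fun P => ?_⟩
  obtain ⟨m, rfl⟩ := Pmk_total P
  rw [← hj, ← hk, mem_lineThrough_iff]
  constructor
  · rintro h
    obtain ⟨p, hp⟩ := (D1 i jp kp hpk m).mp h
    exact ⟨p, by rw [hp]⟩
  · rintro ⟨p, hp⟩
    exact (D1 i jp kp hpk m).mpr ⟨p, Pmk_inj hp⟩

section Helpers
variable {X : Type} [Fintype X] [DecidableEq X] {X₀ : Finset X} {H : Finset (Finset X)}

lemma edge31
    (hH : ∀ e : Finset X, e.card = 4 →
      (((e ∩ X₀).card = 3 ∧ (e ∩ X₀ᶜ).card = 1) ∨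
       ((e ∩ X₀).card = 1 ∧ (e ∩ X₀ᶜ).card = 3)) → e ∈ H)
    {u1 u2 u3 v : X} (h1 : u1 ∈ X₀) (h2 : u2 ∈ X₀) (h3 : u3 ∈ X₀) (hv : v ∈ X₀ᶜ)
    (h12 : u1 ≠ u2) (h13 : u1 ≠ u3) (h23 : u2 ≠ u3) :
    ({u1, u2, u3, v} : Finset X) ∈ H := by
  have hv' : v ∉ X₀ := Finset.mem_compl.mp hv
  have hv1 : u1 ≠ v := fun h => hv' (h ▸ h1)
  have hv2 : u2 ≠ v := fun h => hv' (h ▸ h2)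
  have hv3 : u3 ≠ v := fun h => hv' (h ▸ h3)
  have h1' : u1 ∉ X₀ᶜ := by simp [h1]
  have h2' : u2 ∉ X₀ᶜ := by simp [h2]
  have h3' : u3 ∉ X₀ᶜ := by simp [h3]
  refine hH _ ?_ (Or.inl ⟨?_, ?_⟩)
  · rw [Finset.card_insert_of_notMem (by simp [h12, h13, hv1]),
      Finset.card_insert_of_notMem (by simp [h23, hv2]),
      Finset.card_insert_of_notMem (by simp [hv3]), Finset.card_singleton]
  · rw [Finset.insert_inter_of_mem h1, Finset.insert_inter_of_mem h2,
      Finset.insert_inter_of_mem h3, Finset.singleton_inter_of_notMem hv',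
      Finset.card_insert_of_notMem (by simp [h12, h13]),
      Finset.card_insert_of_notMem (by simp [h23])]
    simp
  · rw [Finset.insert_inter_of_notMem h1', Finset.insert_inter_of_notMem h2',
      Finset.insert_inter_of_notMem h3', Finset.singleton_inter_of_mem hv,
      Finset.card_singleton]

lemma edge13
    (hH : ∀ e : Finset X, e.card = 4 →
      (((e ∩ X₀).card = 3 ∧ (e ∩ X₀ᶜ).card = 1) ∨
       ((e ∩ X₀).card = 1 ∧ (e ∩ X₀ᶜ).card = 3)) → e ∈ H)
    {u v1 v2 v3 : X} (hu : u ∈ X₀) (h1 : v1 ∈ X₀ᶜ) (h2 : v2 ∈ X₀ᶜ) (h3 : v3 ∈ X₀ᶜ)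
    (h12 : v1 ≠ v2) (h13 : v1 ≠ v3) (h23 : v2 ≠ v3) :
    ({u, v1, v2, v3} : Finset X) ∈ H := by
  have hu' : u ∉ X₀ᶜ := by simp [hu]
  have h1' : v1 ∉ X₀ := Finset.mem_compl.mp h1
  have h2' : v2 ∉ X₀ := Finset.mem_compl.mp h2
  have h3' : v3 ∉ X₀ := Finset.mem_compl.mp h3
  have hu1 : u ≠ v1 := fun h => h1' (h ▸ hu)
  have hu2 : u ≠ v2 := fun h => h2' (h ▸ hu)
  have hu3 : u ≠ v3 := fun h => h3' (h ▸ hu)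
  refine hH _ ?_ (Or.inr ⟨?_, ?_⟩)
  · rw [Finset.card_insert_of_notMem (by simp [hu1, hu2, hu3]),
      Finset.card_insert_of_notMem (by simp [h12, h13]),
      Finset.card_insert_of_notMem (by simp [h23]), Finset.card_singleton]
  · rw [Finset.insert_inter_of_mem hu, Finset.insert_inter_of_notMem h1',
      Finset.insert_inter_of_notMem h2', Finset.singleton_inter_of_notMem h3']
    simp
  · rw [Finset.insert_inter_of_notMem hu', Finset.insert_inter_of_mem h1,
      Finset.insert_inter_of_mem h2, Finset.singleton_inter_of_mem h3,
      Finset.card_insert_of_notMem (by simp [h12, h13]),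
      Finset.card_insert_of_notMem (by simp [h23]), Finset.card_singleton]

end Helpers


/-- If a 4-graph `H` on `X = X₀ ∪ X₁` with `|X₀| = |X₁| = n/2` (`n` large)
contains all `3+1`-type quadruples, every pair link graph `G_{a,b}`
(`{a,b} ⊆ X₀`) has minimum degree at least 2 on `X₁`, and there is a
triangle-coloured matching — `a, b, c ∈ X₀` and a matching `e₁, e₂, e₃` in `X₁`
with `e₁ ∈ G_{b,c}`, `e₂ ∈ G_{a,c}`, `e₃ ∈ G_{a,b}` — then `H` contains a copy
of `PG₂(3)`. -/
theorem triangle_coloured_matching_gives_PG23 :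
    ∃ n₀ : ℕ, ∀ (X : Type) [Fintype X] [DecidableEq X],
      ∀ (X₀ : Finset X) (H : Finset (Finset X)),
      n₀ ≤ Fintype.card X →
      X₀.card = X₀ᶜ.card →
      (∀ e ∈ H, e.card = 4) →
      (∀ e : Finset X, e.card = 4 →
        (((e ∩ X₀).card = 3 ∧ (e ∩ X₀ᶜ).card = 1) ∨
         ((e ∩ X₀).card = 1 ∧ (e ∩ X₀ᶜ).card = 3)) → e ∈ H) →
      (∀ a ∈ X₀, ∀ b ∈ X₀, a ≠ b → ∀ v ∈ X₀ᶜ,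
        ∃ u w : X, u ∈ X₀ᶜ ∧ w ∈ X₀ᶜ ∧ u ≠ w ∧ u ≠ v ∧ w ≠ v ∧
          ({a, b, v, u} : Finset X) ∈ H ∧ ({a, b, v, w} : Finset X) ∈ H) →
      (∃ a b c : X, a ∈ X₀ ∧ b ∈ X₀ ∧ c ∈ X₀ ∧ a ≠ b ∧ a ≠ c ∧ b ≠ c ∧
        ∃ p q r s t w : X, p ∈ X₀ᶜ ∧ q ∈ X₀ᶜ ∧ r ∈ X₀ᶜ ∧ s ∈ X₀ᶜ ∧
          t ∈ X₀ᶜ ∧ w ∈ X₀ᶜ ∧ ([p, q, r, s, t, w] : List X).Nodup ∧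
          ({b, c, p, q} : Finset X) ∈ H ∧ ({a, c, r, s} : Finset X) ∈ H ∧
          ({a, b, t, w} : Finset X) ∈ H) →
      ContainsPG23 H := by
  refine ⟨14, ?_⟩
  intro X _ _ X₀ H hn hcard _ hH _ hmatch
  obtain ⟨a, b, c, ha, hb, hc, hab, hac, hbc, p, q, r, s, t, w,
    hp, hq, hr, hs, ht, hw, hnod, hbcpq, hacrs, habtw⟩ := hmatch
  -- X₀ has at least 7 elements
  have hsum : X₀.card + X₀ᶜ.card = Fintype.card X := Finset.card_add_card_compl X₀
  have h7 : 7 ≤ X₀.card := by omega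
  -- extract four more elements of X₀
  have habc : ({a, b, c} : Finset X) ⊆ X₀ := by
    intro x hx; simp only [Finset.mem_insert, Finset.mem_singleton] at hx
    rcases hx with rfl | rfl | rfl <;> assumption
  have hcard3 : ({a, b, c} : Finset X).card ≤ 3 := by
    apply le_trans (Finset.card_insert_le _ _)
    simp [Finset.card_insert_le]
    exact Nat.lt_of_le_of_lt (Finset.card_insert_le _ _) (by simp)
  have h4 : 4 ≤ (X₀ \ {a, b, c}).card := by
    have := Finset.card_sdiff_add_card_eq_card habc
    omega
  obtain ⟨T, hTsub, hTcard⟩ := Finset.exists_subset_card_eq h4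
  have hTnod := T.nodup_toList
  have hTlen : T.toList.length = 4 := by rw [Finset.length_toList, hTcard]
  have hTmem : ∀ x ∈ T.toList, x ∈ X₀ ∧ x ≠ a ∧ x ≠ b ∧ x ≠ c := by
    intro x hx
    have := hTsub (Finset.mem_toList.mp hx)
    simp only [Finset.mem_sdiff, Finset.mem_insert, Finset.mem_singleton, not_or] at this
    exact ⟨this.1, this.2⟩
  obtain ⟨d1, d2, d3, d4, hT⟩ : ∃ d1 d2 d3 d4, T.toList = [d1, d2, d3, d4] := by
    rcases hl : T.toList with _ | ⟨d1, _ | ⟨d2, _ | ⟨d3, _ | ⟨d4, _ | ⟨d5, l⟩⟩⟩⟩⟩ <;>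
      simp_all
  rw [hT] at hTnod hTmem
  simp only [List.nodup_cons, List.mem_cons, List.not_mem_nil, or_false, not_or,
    List.nodup_nil, and_true, not_false_eq_true] at hTnod
  obtain ⟨⟨h12, h13, h14⟩, ⟨h23, h24⟩, h34⟩ := hTnod
  have hd1 := hTmem d1 (by simp); have hd2 := hTmem d2 (by simp)
  have hd3 := hTmem d3 (by simp); have hd4 := hTmem d4 (by simp)
  simp only [List.nodup_cons, List.mem_cons, List.not_mem_nil, or_false, not_or,
    List.nodup_nil, and_true, not_false_eq_true] at hnod
  obtain ⟨⟨hpq, hpr, hps, hpt, hpw⟩, ⟨hqr, hqs, hqt, hqw⟩, ⟨hrs, hrt, hrw⟩, ⟨hst, hsw⟩,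
    htw⟩ := hnod
  -- the vertex list
  set l : List X := [a, b, c, d1, d2, d3, d4, t, w, r, s, p, q] with hl
  have cross : ∀ {x y : X}, x ∈ X₀ → y ∈ X₀ᶜ → x ≠ y :=
    fun hx hy e => (Finset.mem_compl.mp hy) (e ▸ hx)
  have hlnod : l.Nodup := by
    simp only [hl, List.nodup_cons, List.mem_cons, List.not_mem_nil, or_false, not_or,
      List.nodup_nil, and_true, not_false_eq_true]
    refine ⟨⟨hab, hac, hd1.2.1.symm, hd2.2.1.symm, hd3.2.1.symm, hd4.2.1.symm,
        cross ha ht, cross ha hw, cross ha hr, cross ha hs, cross ha hp, cross ha hq⟩,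
      ⟨hbc, hd1.2.2.1.symm, hd2.2.2.1.symm, hd3.2.2.1.symm, hd4.2.2.1.symm,
        cross hb ht, cross hb hw, cross hb hr, cross hb hs, cross hb hp, cross hb hq⟩,
      ⟨hd1.2.2.2.symm, hd2.2.2.2.symm, hd3.2.2.2.symm, hd4.2.2.2.symm,
        cross hc ht, cross hc hw, cross hc hr, cross hc hs, cross hc hp, cross hc hq⟩,
      ⟨h12, h13, h14, cross hd1.1 ht, cross hd1.1 hw, cross hd1.1 hr, cross hd1.1 hs,
        cross hd1.1 hp, cross hd1.1 hq⟩,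
      ⟨h23, h24, cross hd2.1 ht, cross hd2.1 hw, cross hd2.1 hr, cross hd2.1 hs,
        cross hd2.1 hp, cross hd2.1 hq⟩,
      ⟨h34, cross hd3.1 ht, cross hd3.1 hw, cross hd3.1 hr, cross hd3.1 hs,
        cross hd3.1 hp, cross hd3.1 hq⟩,
      ⟨cross hd4.1 ht, cross hd4.1 hw, cross hd4.1 hr, cross hd4.1 hs,
        cross hd4.1 hp, cross hd4.1 hq⟩,
      ⟨htw, (Ne.symm hrt), (Ne.symm hst), (Ne.symm hpt), (Ne.symm hqt)⟩,
      ⟨(Ne.symm hrw), (Ne.symm hsw), (Ne.symm hpw), (Ne.symm hqw)⟩,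
      ⟨hrs, (Ne.symm hpr), (Ne.symm hqr)⟩, ⟨(Ne.symm hps), (Ne.symm hqs)⟩, hpq⟩
  have hlen : l.length = 13 := rfl
  let vert : Fin 13 → X := fun i => l.get (Fin.cast hlen.symm i)
  have hvinj : Function.Injective vert :=
    (List.nodup_iff_injective_get.mp hlnod).comp (Fin.cast_injective _)
  -- define the embedding
  choose idx hidx using Pmk_total
  refine ⟨fun P => vert (idx P), ?_, ?_⟩
  · intro P Q h
    have : idx P = idx Q := hvinj h
    rw [← hidx P, ← hidx Q, this]
  · intro L hLine
    obtain ⟨i, hi⟩ := isLine_classify hLine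
    have hPk : ∀ k : Fin 13, vert (idx (Pmk k)) = vert k := by
      intro k; congr 1; exact Pmk_inj (hidx (Pmk k))
    have hLeq : L = (Finset.univ : Finset (Fin 4)).image fun p => Pmk (lns i p) := by
      apply Finset.coe_injective
      rw [hi, Finset.coe_image, Finset.coe_univ, Set.image_univ]
      ext P; simp [Set.range, eq_comm]
    rw [hLeq, Finset.image_image]
    have huniv : (Finset.univ : Finset (Fin 4)) = {0, 1, 2, 3} := by decide
    rw [huniv]
    simp only [Finset.image_insert, Finset.image_singleton, Function.comp_apply, hPk]
    fin_cases i
    · exact hbcpq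
    · exact hacrs
    · exact habtw
    · exact edge31 hH hc hd3.1 hd4.1 hw hd3.2.2.2.symm hd4.2.2.2.symm h34
    · exact edge31 hH hc hd1.1 hd2.1 ht hd1.2.2.2.symm hd2.2.2.2.symm h12
    · exact edge31 hH hb hd2.1 hd4.1 hs hd2.2.2.1.symm hd4.2.2.1.symm h24
    · exact edge31 hH hb hd1.1 hd3.1 hr hd1.2.2.1.symm hd3.2.2.1.symm h13
    · exact edge31 hH ha hd2.1 hd3.1 hq hd2.2.1.symm hd3.2.1.symm h23
    · exact edge31 hH ha hd1.1 hd4.1 hp hd1.2.1.symm hd4.2.1.symm h14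
    · exact edge13 hH hd1.1 hw hs hq (Ne.symm hsw) (Ne.symm hqw) (Ne.symm hqs)
    · exact edge13 hH hd2.1 hw hr hp (Ne.symm hrw) (Ne.symm hpw) (Ne.symm hpr)
    · exact edge13 hH hd3.1 ht hs hp (Ne.symm hst) (Ne.symm hpt) (Ne.symm hps)
    · exact edge13 hH hd4.1 ht hr hq (Ne.symm hrt) (Ne.symm hqt) (Ne.symm hqr)
end
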